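/- A nonempty closed subset C of K is a convex-trace set with respect to Φ if and only if for every x̄ ∈ K \ C there exists φ ∈ Φ such that sup_{x∈C} φ(x) < φ(x̄). -/

import Mathlib

open MeasureTheory Set

section Defs

variable {K : Type*} [TopologicalSpace K] [CompactSpace K]

/-- The canonical injection `δ^Φ : K → Φ*`, `δ^Φ(x)(φ) = φ(x)`. -/
noncomputable def deltaPhi (Φ : Submodule ℝ C(K, ℝ)) (x : K) : WeakDual ℝ ↥Φ :=
  (ContinuousMap.evalCLM ℝ x).comp Φ.subtypeL

/-- The set `K(Φ) = {Q ∈ Φ* : ‖Q‖ = Q(𝟏) = 1}`. -/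
noncomputable def KPhi (Φ : Submodule ℝ C(K, ℝ))
    (h1 : ContinuousMap.const K (1 : ℝ) ∈ Φ) : Set (WeakDual ℝ ↥Φ) :=
  {Q | @Norm.norm (↥Φ →L[ℝ] ℝ)
      (@ContinuousLinearMap.hasOpNorm ℝ ℝ ↥Φ ℝ (Submodule.seminormedAddCommGroup Φ) _ _ _ _ _
        (RingHom.id ℝ)) (WeakDual.toStrongDual Q) = 1 ∧ Q ⟨ContinuousMap.const K (1 : ℝ), h1⟩ = 1}

end Defs

section DefsTC

variable {K : Type*} [TopologicalSpace K] [CompactSpace K]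

/-- A closed set `C ⊆ K` is convex-trace w.r.t. `Φ` if `δ^Φ(C) = δ^Φ(K) ∩ Ĉ` for some
weak*-closed convex subset `Ĉ` of `K(Φ)`. -/
def TraceConvexSet (Φ : Submodule ℝ C(K, ℝ)) (h1 : ContinuousMap.const K (1 : ℝ) ∈ Φ)
    (C : Set K) : Prop :=
  IsClosed C ∧ ∃ Ch : Set (WeakDual ℝ ↥Φ), Ch ⊆ KPhi Φ h1 ∧ IsClosed Ch ∧ Convex ℝ Ch ∧
    deltaPhi Φ '' C = deltaPhi Φ '' Set.univ ∩ Ch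

end DefsTC

/-- Every continuous linear functional on the weak-* dual is evaluation at a point. -/
lemma weakDual_dual_eval {E : Type*} [NormedAddCommGroup E] [NormedSpace ℝ E]
    (f : WeakDual ℝ E →L[ℝ] ℝ) : ∃ m : E, ∀ Q : WeakDual ℝ E, f Q = Q m := by
  haveI : Nonempty E := ⟨0⟩
  have hws := (topDualPairing ℝ E).weakBilin_withSeminorms
  set p : SeminormFamily ℝ (WeakDual ℝ E) E := (topDualPairing ℝ E).toSeminormFamily with hp
  have hq : Continuous ((f : WeakDual ℝ E →ₗ[ℝ] ℝ).toSeminorm : WeakDual ℝ E → ℝ) := by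
    rw [LinearMap.coe_toSeminorm]
    exact f.continuous.norm
  obtain ⟨s, Cc, hC0, hle⟩ := Seminorm.bound_of_continuous hws _ hq
  -- evaluation functionals
  let L : s → (WeakDual ℝ E) →ₗ[ℝ] ℝ := fun i =>
    { toFun := fun Q => Q (i : E)
      map_add' := fun _ _ => rfl
      map_smul' := fun _ _ => rfl }
  have hker : ⨅ i : s, LinearMap.ker (L i) ≤ LinearMap.ker (f : WeakDual ℝ E →ₗ[ℝ] ℝ) := by
    intro Q hQ
    simp only [Submodule.mem_iInf, LinearMap.mem_ker] at hQ ⊢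
    have h0 : (s.sup p) Q = 0 := by
      refine le_antisymm ?_ (apply_nonneg _ _)
      refine Seminorm.finset_sup_apply_le le_rfl (fun i hi => ?_)
      show ‖(topDualPairing ℝ E Q) i‖ ≤ 0
      have : Q i = 0 := hQ ⟨i, hi⟩
      exact le_of_eq (norm_eq_zero.mpr this)
    have hfq : ‖f Q‖ ≤ (Cc : ℝ) * (s.sup p) Q := hle Q
    rw [h0, mul_zero] at hfq
    exact norm_le_zero_iff.mp hfq
  have hspan := mem_span_of_iInf_ker_le_ker hker
  obtain ⟨c, hc⟩ := (Submodule.mem_span_range_iff_exists_fun ℝ).mp hspan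
  refine ⟨∑ i : s, c i • (i : E), fun Q => ?_⟩
  have h1 : f Q = ∑ i : s, c i * Q (i : E) := by
    have := LinearMap.congr_fun hc Q
    simp only [LinearMap.coe_sum, Finset.sum_apply, LinearMap.smul_apply, smul_eq_mul] at this
    exact this.symm
  rw [h1, map_sum]
  simp [smul_eq_mul]

section Abstract

variable {E : Type*} [NormedAddCommGroup E] [NormedSpace ℝ E]

/-- Separation of a point from a weak-* closed convex set by an evaluation functional. -/
lemma abstract_sep {s : Set (WeakDual ℝ E)} (hconv : Convex ℝ s) (hcl : IsClosed s)
    {x : WeakDual ℝ E} (hx : x ∉ s) :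
    ∃ (m : E) (u : ℝ), (∀ Q ∈ s, Q m < u) ∧ u < x m := by
  haveI : LocallyConvexSpace ℝ (WeakDual ℝ E) :=
    @WeakBilin.locallyConvexSpace ℝ (E →L[ℝ] ℝ) E _ _ _ _ _ _
      (ContinuousLinearMap.module) _ (topDualPairing ℝ E)
  obtain ⟨f, u, hfu, huf⟩ := geometric_hahn_banach_closed_point hconv hcl hx
  obtain ⟨m, hm⟩ := weakDual_dual_eval f
  exact ⟨m, u, fun Q hQ => hm Q ▸ hfu Q hQ, hm x ▸ huf⟩

/-- The candidate weak-* closed convex witness set. -/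
def wdSet (e : E) (c : E → ℝ) : Set (WeakDual ℝ E) :=
  {Q | ‖WeakDual.toStrongDual Q‖ ≤ 1 ∧ Q e = 1 ∧ ∀ φ : E, Q φ ≤ c φ}

lemma wdSet_isClosed (e : E) (c : E → ℝ) : IsClosed (wdSet e c) := by
  have h1 : IsClosed {Q : WeakDual ℝ E | ‖WeakDual.toStrongDual Q‖ ≤ 1} := by
    have hb := WeakDual.isClosed_closedBall (0 : StrongDual ℝ E) 1
    convert hb using 1
    ext Q
    simp [dist_zero_right]
  have h2 : IsClosed {Q : WeakDual ℝ E | Q e = 1} :=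
    isClosed_eq (WeakDual.eval_continuous e) continuous_const
  have h3 : IsClosed {Q : WeakDual ℝ E | ∀ φ : E, Q φ ≤ c φ} := by
    have heq : {Q : WeakDual ℝ E | ∀ φ : E, Q φ ≤ c φ} =
        ⋂ φ : E, {Q : WeakDual ℝ E | Q φ ≤ c φ} := by ext; simp
    rw [heq]
    exact isClosed_iInter fun φ =>
      isClosed_le (WeakDual.eval_continuous φ) continuous_const
  exact h1.inter (h2.inter h3)

lemma wdSet_convex (e : E) (c : E → ℝ) : Convex ℝ (wdSet e c) := by
  rintro Q1 ⟨h1n, h11, h1s⟩ Q2 ⟨h2n, h21, h2s⟩ a b ha hb hab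
  have hadd : ∀ φ : E, (a • Q1 + b • Q2) φ = a * Q1 φ + b * Q2 φ := fun _ => rfl
  refine ⟨?_, ?_, ?_⟩
  · have heq : WeakDual.toStrongDual (a • Q1 + b • Q2) =
        a • WeakDual.toStrongDual Q1 + b • WeakDual.toStrongDual Q2 := rfl
    rw [heq]
    refine le_trans (norm_add_le _ _) ?_
    rw [norm_smul, norm_smul, Real.norm_of_nonneg ha, Real.norm_of_nonneg hb]
    nlinarith [mul_le_mul_of_nonneg_left h1n ha, mul_le_mul_of_nonneg_left h2n hb]
  · rw [hadd, h11, h21]; linarith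
  · intro φ
    rw [hadd]
    calc a * Q1 φ + b * Q2 φ ≤ a * c φ + b * c φ :=
          add_le_add (mul_le_mul_of_nonneg_left (h1s φ) ha)
            (mul_le_mul_of_nonneg_left (h2s φ) hb)
      _ = c φ := by rw [← add_mul, hab, one_mul]

lemma wd_norm_le (Q : WeakDual ℝ E) (h : ∀ φ : E, ‖Q φ‖ ≤ ‖φ‖) :
    ‖WeakDual.toStrongDual Q‖ ≤ 1 :=
  ContinuousLinearMap.opNorm_le_bound _ zero_le_one fun φ => by
    rw [one_mul]; exact h φ

lemma wd_norm_eq (Q : WeakDual ℝ E) (e : E) (he : ‖e‖ = 1)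
    (hn : ‖WeakDual.toStrongDual Q‖ ≤ 1) (h1 : Q e = 1) :
    ‖WeakDual.toStrongDual Q‖ = 1 := by
  refine le_antisymm hn ?_
  have h := (WeakDual.toStrongDual Q).le_opNorm e
  rw [he, mul_one] at h
  calc (1 : ℝ) = Q e := h1.symm
    _ ≤ ‖Q e‖ := by rw [Real.norm_eq_abs]; exact le_abs_self _
    _ ≤ ‖WeakDual.toStrongDual Q‖ := h

end Abstract

set_option maxHeartbeats 1000000 in
/-- **Separation theorem.** A nonempty closed `C ⊆ K` is convex-trace w.r.t.
`Φ` iff every `x̄ ∈ K \ C` can be separated from `C` by some `φ ∈ Φ`: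
`sup_{x∈C} φ(x) < φ(x̄)`. -/
theorem stmt7 {K : Type*} [TopologicalSpace K] [CompactSpace K] [T2Space K]
    (Φ : Submodule ℝ C(K, ℝ)) (hΦclosed : IsClosed (Φ : Set C(K, ℝ)))
    (hsep : ∀ x y : K, x ≠ y → ∃ φ ∈ Φ, φ x ≠ φ y)
    (hconst : ∀ c : ℝ, ContinuousMap.const K c ∈ Φ)
    (C : Set K) (hne : C.Nonempty) (hC : IsClosed C) :
    TraceConvexSet Φ (hconst 1) C ↔
      ∀ xb : K, xb ∉ C → ∃ φ ∈ Φ, sSup ((fun y : K => φ y) '' C) < φ xb := by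
  haveI hKne : Nonempty K := ⟨hne.some⟩
  have hCcomp : IsCompact C := hC.isCompact
  have hbdd : ∀ ψ : C(K, ℝ), BddAbove ((fun y : K => ψ y) '' C) := fun ψ =>
    (hCcomp.image ψ.continuous).bddAbove
  have hnorm1 : ‖(⟨ContinuousMap.const K (1 : ℝ), hconst 1⟩ : ↥Φ)‖ = 1 := by
    rw [Submodule.coe_norm]
    refine le_antisymm ((ContinuousMap.norm_le _ zero_le_one).mpr fun x => by simp) ?_
    simpa using (ContinuousMap.const K (1 : ℝ)).norm_coe_le_norm hne.some
  constructor
  · rintro ⟨-, Ch, hChK, hChcl, hChconv, hChEq⟩ xb hxb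
    have hinj : Function.Injective (deltaPhi Φ) := by
      intro x y hxy
      by_contra hne'
      obtain ⟨φ, hφ, hval⟩ := hsep x y hne'
      exact hval (congrArg (fun Q : WeakDual ℝ ↥Φ => Q ⟨φ, hφ⟩) hxy)
    have hxbCh : deltaPhi Φ xb ∉ Ch := by
      intro hmem
      have hmem' : deltaPhi Φ xb ∈ deltaPhi Φ '' C := by
        rw [hChEq]; exact ⟨⟨xb, mem_univ xb, rfl⟩, hmem⟩
      obtain ⟨x, hxC, hx⟩ := hmem'
      exact hxb (hinj hx ▸ hxC)
    obtain ⟨m, u, hmu, hum⟩ := abstract_sep (E := ↥Φ) hChconv hChcl hxbCh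
    refine ⟨(m : C(K, ℝ)), m.2, ?_⟩
    have hsub : deltaPhi Φ '' C ⊆ Ch := by rw [hChEq]; exact inter_subset_right
    have hub : sSup ((fun y : K => (m : C(K, ℝ)) y) '' C) ≤ u := by
      refine csSup_le (hne.image _) ?_
      rintro _ ⟨x, hx, rfl⟩
      exact le_of_lt (hmu _ (hsub (mem_image_of_mem _ hx)))
    exact lt_of_le_of_lt hub hum
  · intro hsepC
    refine ⟨hC, wdSet (⟨ContinuousMap.const K (1 : ℝ), hconst 1⟩ : ↥Φ)
        (fun φ => sSup ((fun y : K => (φ : C(K, ℝ)) y) '' C)),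
        ?_, wdSet_isClosed _ _, wdSet_convex _ _, ?_⟩
    · have hsub : wdSet (⟨ContinuousMap.const K (1 : ℝ), hconst 1⟩ : ↥Φ)
          (fun φ => sSup ((fun y : K => (φ : C(K, ℝ)) y) '' C)) ⊆ KPhi Φ (hconst 1) := by
        rintro Q ⟨hQn, hQ1, -⟩
        have h := wd_norm_eq (E := ↥Φ) Q _ hnorm1 hQn hQ1
        exact ⟨h, hQ1⟩
      exact hsub
    · ext Q
      constructor
      · rintro ⟨x, hx, rfl⟩
        refine ⟨⟨x, mem_univ x, rfl⟩, wd_norm_le _ (fun φ => ?_), rfl, fun φ => ?_⟩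
        · show ‖(φ : C(K, ℝ)) x‖ ≤ ‖φ‖
          rw [Submodule.coe_norm]
          exact (φ : C(K, ℝ)).norm_coe_le_norm x
        · exact le_csSup (hbdd _) ⟨x, hx, rfl⟩
      · rintro ⟨⟨x, -, rfl⟩, -, -, hQs⟩
        by_cases hxC : x ∈ C
        · exact mem_image_of_mem _ hxC
        · obtain ⟨φ, hφ, hlt⟩ := hsepC x hxC
          exact absurd (hQs ⟨φ, hφ⟩) (not_le.mpr hlt)
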